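/- Let f : ℝ^{n×m} → ℝ be continuously differentiable, λ > 0, μ > 0. Fix (Ū, V̄) ∈ ℝ^{n×r} × ℝ^{m×r}. Then for every direction (G, H) ∈ ℝ^{n×r} × ℝ^{m×r}, the subderivative of Φ_{λ,μ} at (Ū, V̄) satisfies: dΦ_{λ,μ}(Ū,V̄)(G,H) = ⟨∇f(Ū V̄ᵀ)V̄ + μŪ, G⟩ + ⟨(∇f(Ū V̄ᵀ))ᵀŪ + μV̄, H⟩ if J_G ⊆ J_Ū and J_H ⊆ J_V̄, and dΦ_{λ,μ}(Ū,V̄)(G,H) = +∞ otherwise. Consequently, if dΦ_{λ,μ}(Ū,V̄)(G,H) < 0, then (G, H) is a descent direction of F_μ(U,V) = f(UVᵀ) + (μ/2)(‖U‖_F² + ‖V‖_F²) at (Ū,V̄), i.e. ⟨∇F_μ(Ū,V̄),(G,H)⟩ < 0. -/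

import Mathlib

open Filter Topology Matrix

attribute [local instance] Matrix.frobeniusSeminormedAddCommGroup
  Matrix.frobeniusNormedAddCommGroup Matrix.frobeniusNormedSpace

/-- The Frobenius (trace) inner product `⟨A,B⟩ = trace(AᵀB) = ∑ᵢⱼ Aᵢⱼ Bᵢⱼ` on matrices. -/
noncomputable def frobInner {α β : Type*} [Fintype α] [Fintype β] (A B : Matrix α β ℝ) : ℝ :=
  ∑ i, ∑ j, A i j * B i j

/-- The column `ℓ_{2,0}`-norm: the number of nonzero columns. -/
noncomputable def l20 {α β : Type*} [Fintype α] [Fintype β] (A : Matrix α β ℝ) : ℕ :=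
  {j : β | (fun i => A i j) ≠ 0}.ncard

/-- `Φ_{λ,μ}(U,V) = f(UVᵀ) + (μ/2)(‖U‖_F² + ‖V‖_F²) + λ(‖U‖_{2,0} + ‖V‖_{2,0})`. -/
noncomputable def Phi {n m r : ℕ} (f : Matrix (Fin n) (Fin m) ℝ → ℝ) (lam mu : ℝ)
    (U : Matrix (Fin n) (Fin r) ℝ) (V : Matrix (Fin m) (Fin r) ℝ) : ℝ :=
  f (U * Vᵀ) + mu / 2 * (frobInner U U + frobInner V V) + lam * ((l20 U : ℝ) + (l20 V : ℝ))

/-- The subderivative `dh(x)(w) = liminf_{t↓0, w'→w} (h(x + t w') − h(x))/t`,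
valued in `[−∞, +∞]`. -/
noncomputable def subderiv {E : Type*} [AddCommGroup E] [Module ℝ E] [TopologicalSpace E]
    (h : E → ℝ) (x w : E) : EReal :=
  Filter.liminf (fun p : ℝ × E => (((h (x + p.1 • p.2) - h x) / p.1 : ℝ) : EReal))
    ((𝓝[>] (0 : ℝ)) ×ˢ 𝓝 w)

section Aux
variable {α β γ : Type*} [Fintype α] [Fintype β] [Fintype γ]

lemma frobInner_comm (A B : Matrix α β ℝ) : frobInner A B = frobInner B A := by
  simp [frobInner, mul_comm]

lemma frobInner_add_left (A B C : Matrix α β ℝ) :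
    frobInner (A + B) C = frobInner A C + frobInner B C := by
  simp [frobInner, Matrix.add_apply, add_mul, Finset.sum_add_distrib]

lemma frobInner_smul_left (c : ℝ) (A B : Matrix α β ℝ) :
    frobInner (c • A) B = c * frobInner A B := by
  simp [frobInner, Matrix.smul_apply, smul_eq_mul, Finset.mul_sum, mul_assoc]

lemma frobInner_add_right (A B C : Matrix α β ℝ) :
    frobInner A (B + C) = frobInner A B + frobInner A C := by
  rw [frobInner_comm, frobInner_add_left, frobInner_comm B, frobInner_comm C]

lemma frobInner_smul_right (c : ℝ) (A B : Matrix α β ℝ) :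
    frobInner A (c • B) = c * frobInner A B := by
  rw [frobInner_comm, frobInner_smul_left, frobInner_comm]

lemma frobInner_mulright (A : Matrix α β ℝ) (C : Matrix α γ ℝ) (B : Matrix β γ ℝ) :
    frobInner A (C * Bᵀ) = frobInner (A * B) C := by
  simp only [frobInner, Matrix.mul_apply, Matrix.transpose_apply, Finset.mul_sum, Finset.sum_mul]
  refine Finset.sum_congr rfl fun i _ => ?_
  rw [Finset.sum_comm]
  exact Finset.sum_congr rfl fun k _ => Finset.sum_congr rfl fun j _ => by ring

lemma frobInner_mulleft (A : Matrix α β ℝ) (U : Matrix α γ ℝ) (Hm : Matrix β γ ℝ) :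
    frobInner A (U * Hmᵀ) = frobInner (Aᵀ * U) Hm := by
  simp only [frobInner, Matrix.mul_apply, Matrix.transpose_apply, Finset.mul_sum, Finset.sum_mul]
  rw [Finset.sum_comm]
  refine Finset.sum_congr rfl fun j _ => ?_
  rw [Finset.sum_comm]
  exact Finset.sum_congr rfl fun k _ => Finset.sum_congr rfl fun i _ => by ring

/-- entry extraction as a linear map -/
def entryLM (i : α) (j : β) : Matrix α β ℝ →ₗ[ℝ] ℝ where
  toFun A := A i j
  map_add' _ _ := rfl
  map_smul' _ _ := rfl

lemma continuous_entry (i : α) (j : β) : Continuous fun A : Matrix α β ℝ => A i j :=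
  (entryLM i j).continuous_of_finiteDimensional

lemma continuous_frobInner_self : Continuous fun A : Matrix α β ℝ => frobInner A A := by
  unfold frobInner
  exact continuous_finset_sum _ fun i _ => continuous_finset_sum _ fun j _ =>
    (continuous_entry i j).mul (continuous_entry i j)

/-- `frobInner A ·` as a linear map -/
noncomputable def frobLM (A : Matrix α β ℝ) : Matrix α β ℝ →ₗ[ℝ] ℝ where
  toFun B := frobInner A B
  map_add' B C := frobInner_add_right A B C
  map_smul' c B := frobInner_smul_right c A B

noncomputable def frobL (A : Matrix α β ℝ) : Matrix α β ℝ →L[ℝ] ℝ :=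
  LinearMap.toContinuousLinearMap (frobLM A)

@[simp] lemma frobL_apply (A B : Matrix α β ℝ) : frobL A B = frobInner A B := rfl

noncomputable def PsiLM : Matrix α β ℝ →ₗ[ℝ] (Matrix α β ℝ →L[ℝ] ℝ) where
  toFun A := frobL A
  map_add' A B := by ext C; simp [frobInner_add_left]
  map_smul' c A := by ext C; simp [frobInner_smul_left]

lemma isBBM_mulT : IsBoundedBilinearMap ℝ
    (fun p : Matrix α γ ℝ × Matrix β γ ℝ => p.1 * p.2ᵀ) where
  add_left x₁ x₂ y := Matrix.add_mul _ _ _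
  smul_left c x y := Matrix.smul_mul _ _ _
  add_right x y₁ y₂ := by rw [Matrix.transpose_add, Matrix.mul_add]
  smul_right c x y := by rw [Matrix.transpose_smul, Matrix.mul_smul]
  bound := ⟨1, one_pos, fun x y => by
    rw [one_mul, ← Matrix.frobenius_norm_transpose y]
    exact Matrix.frobenius_norm_mul x yᵀ⟩

end Aux

lemma tendsto_quot {E : Type*} [NormedAddCommGroup E] [NormedSpace ℝ E]
    {F : E → ℝ} {x : E} {L : E →L[ℝ] ℝ} (h : HasStrictFDerivAt F L x) (w : E) :
    Tendsto (fun p : ℝ × E => (F (x + p.1 • p.2) - F x) / p.1)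
      (𝓝[>] (0:ℝ) ×ˢ 𝓝 w) (𝓝 (L w)) := by
  set l := 𝓝[>] (0:ℝ) ×ˢ 𝓝 w with hl
  have hfst0 : Tendsto (fun p : ℝ × E => p.1) l (𝓝 (0:ℝ)) :=
    tendsto_fst.mono_right nhdsWithin_le_nhds
  have hsnd : Tendsto (fun p : ℝ × E => p.2) l (𝓝 w) := tendsto_snd
  have hmap : Tendsto (fun p : ℝ × E => (x + p.1 • p.2, x)) l (𝓝 (x, x)) := by
    have h1 : Tendsto (fun p : ℝ × E => x + p.1 • p.2) l (𝓝 x) := by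
      have h2 : Tendsto (fun p : ℝ × E => p.1 • p.2) l (𝓝 ((0:ℝ) • w)) := (continuous_smul.tendsto ((0:ℝ), w)).comp (hfst0.prodMk_nhds hsnd)
      have := (tendsto_const_nhds : Tendsto (fun _ : ℝ × E => x) l (𝓝 x)).add h2
      simpa using this
    exact h1.prodMk_nhds tendsto_const_nhds
  have ho := (hasStrictFDerivAt_iff_isLittleO.1 h).comp_tendsto hmap
  simp only [Function.comp_def, add_sub_cancel_left] at ho
  have hpos : ∀ᶠ p : ℝ × E in l, 0 < p.1 :=
    Eventually.prod_inl (eventually_mem_nhdsWithin.mono fun t ht => ht) _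
  have hbn : ∀ᶠ p : ℝ × E in l, ‖p.2‖ < ‖w‖ + 1 :=
    Tendsto.eventually_lt_const (by linarith [norm_nonneg w])
      ((continuous_norm.tendsto w).comp hsnd)
  have hrem : Tendsto (fun p : ℝ × E => (F (x + p.1 • p.2) - F x - L (p.1 • p.2)) / p.1)
      l (𝓝 0) := by
    rw [NormedAddCommGroup.tendsto_nhds_zero]
    intro ε hε
    have hwpos : (0:ℝ) < ‖w‖ + 1 := by linarith [norm_nonneg w]
    have hcpos : (0:ℝ) < ε / (2 * (‖w‖ + 1)) := by positivity
    filter_upwards [ho.def hcpos, hpos, hbn] with p h1 h2 h3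
    have ht : p.1 ≠ 0 := ne_of_gt h2
    have hsm : ‖p.1 • p.2‖ = p.1 * ‖p.2‖ := by
      rw [norm_smul, Real.norm_eq_abs, abs_of_pos h2]
    rw [norm_div, Real.norm_eq_abs (p.1), abs_of_pos h2, div_lt_iff₀ h2]
    calc ‖F (x + p.1 • p.2) - F x - L (p.1 • p.2)‖
        ≤ ε / (2 * (‖w‖ + 1)) * ‖p.1 • p.2‖ := h1
      _ = ε / (2 * (‖w‖ + 1)) * ‖p.2‖ * p.1 := by rw [hsm]; ring
      _ < ε * p.1 := by
          have hb : ε / (2 * (‖w‖ + 1)) * ‖p.2‖ < ε := by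
            have h4 : ε / (2 * (‖w‖ + 1)) * ‖p.2‖ ≤ ε / (2 * (‖w‖ + 1)) * (‖w‖ + 1) := by
              exact mul_le_mul_of_nonneg_left (le_of_lt h3) (le_of_lt hcpos)
            have h5 : ε / (2 * (‖w‖ + 1)) * (‖w‖ + 1) = ε / 2 := by
              field_simp
            linarith
          exact (mul_lt_mul_of_pos_right hb h2)
  have hLw : Tendsto (fun p : ℝ × E => L p.2) l (𝓝 (L w)) :=
    (L.continuous.tendsto w).comp hsnd
  have hsum := hLw.add hrem
  rw [add_zero] at hsum
  refine Tendsto.congr' ?_ hsum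
  filter_upwards [hpos] with p hp
  have ht : p.1 ≠ 0 := ne_of_gt hp
  have hLs : L (p.1 • p.2) = p.1 * L p.2 := by rw [L.map_smul]; rfl
  field_simp [hLs]
  rw [hLs]; ring

lemma tendsto_quot' {E : Type*} [NormedAddCommGroup E] [NormedSpace ℝ E]
    {F : E → ℝ} {x : E} {L : E →L[ℝ] ℝ} (h : HasStrictFDerivAt F L x)
    {α : Type*} {l : Filter α} {t : α → ℝ} {W : α → E} {w : E}
    (ht : Tendsto t l (𝓝[>] (0:ℝ))) (hW : Tendsto W l (𝓝 w)) :
    Tendsto (fun a => (F (x + t a • W a) - F x) / t a) l (𝓝 (L w)) := by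
  have := (tendsto_quot h w).comp (ht.prodMk hW)
  exact this

section Smooth
variable {n m r : ℕ}

/-- linear map `X ↦ U₀ * Xᵀ` -/
noncomputable def lmulT {a b c : ℕ} (U0 : Matrix (Fin a) (Fin c) ℝ) :
    Matrix (Fin b) (Fin c) ℝ →ₗ[ℝ] Matrix (Fin a) (Fin b) ℝ where
  toFun X := U0 * Xᵀ
  map_add' X Y := by simp [Matrix.transpose_add, Matrix.mul_add]
  map_smul' c X := by simp [Matrix.transpose_smul, Matrix.mul_smul]

/-- linear map `X ↦ X * V₀ᵀ` -/
noncomputable def rmulT {a b c : ℕ} (V0 : Matrix (Fin b) (Fin c) ℝ) :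
    Matrix (Fin a) (Fin c) ℝ →ₗ[ℝ] Matrix (Fin a) (Fin b) ℝ where
  toFun X := X * V0ᵀ
  map_add' X Y := Matrix.add_mul _ _ _
  map_smul' c X := by simp [Matrix.smul_mul]

lemma tendsto_smooth
    (f : Matrix (Fin n) (Fin m) ℝ → ℝ) (f' : Matrix (Fin n) (Fin m) ℝ → Matrix (Fin n) (Fin m) ℝ)
    (hdiff : Differentiable ℝ f)
    (hgrad : ∀ X H, fderiv ℝ f X H = frobInner (f' X) H)
    (hcont : Continuous f') (mu : ℝ)
    (Ubar : Matrix (Fin n) (Fin r) ℝ) (Vbar : Matrix (Fin m) (Fin r) ℝ)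
    (G : Matrix (Fin n) (Fin r) ℝ) (H : Matrix (Fin m) (Fin r) ℝ) :
    Tendsto (fun p : ℝ × (Matrix (Fin n) (Fin r) ℝ × Matrix (Fin m) (Fin r) ℝ) =>
      ((f ((Ubar + p.1 • p.2.1) * (Vbar + p.1 • p.2.2)ᵀ)
        + mu / 2 * (frobInner (Ubar + p.1 • p.2.1) (Ubar + p.1 • p.2.1)
                    + frobInner (Vbar + p.1 • p.2.2) (Vbar + p.1 • p.2.2)))
       - (f (Ubar * Vbarᵀ) + mu / 2 * (frobInner Ubar Ubar + frobInner Vbar Vbar))) / p.1)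
      (𝓝[>] (0:ℝ) ×ˢ 𝓝 (G, H))
      (𝓝 (frobInner (f' (Ubar * Vbarᵀ) * Vbar + mu • Ubar) G +
           frobInner ((f' (Ubar * Vbarᵀ))ᵀ * Ubar + mu • Vbar) H)) := by
  set X : Matrix (Fin n) (Fin m) ℝ := Ubar * Vbarᵀ with hX
  set l := 𝓝[>] (0:ℝ) ×ˢ 𝓝 ((G, H) : Matrix (Fin n) (Fin r) ℝ × Matrix (Fin m) (Fin r) ℝ) with hld
  have hfst : Tendsto (fun p : ℝ × (Matrix (Fin n) (Fin r) ℝ × Matrix (Fin m) (Fin r) ℝ) => p.1) l (𝓝[>] (0:ℝ)) := tendsto_fst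
  have hfst0 : Tendsto (fun p : ℝ × (Matrix (Fin n) (Fin r) ℝ × Matrix (Fin m) (Fin r) ℝ) => p.1) l (𝓝 (0:ℝ)) :=
    hfst.mono_right nhdsWithin_le_nhds
  have hsnd : Tendsto (fun p : ℝ × (Matrix (Fin n) (Fin r) ℝ × Matrix (Fin m) (Fin r) ℝ) => p.2) l (𝓝 (G, H)) := tendsto_snd
  have hG' : Tendsto (fun p : ℝ × (Matrix (Fin n) (Fin r) ℝ × Matrix (Fin m) (Fin r) ℝ) => p.2.1) l (𝓝 G) :=
    (continuous_fst.tendsto (G, H)).comp hsnd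
  have hH' : Tendsto (fun p : ℝ × (Matrix (Fin n) (Fin r) ℝ × Matrix (Fin m) (Fin r) ℝ) => p.2.2) l (𝓝 H) :=
    (continuous_snd.tendsto (G, H)).comp hsnd
  have hpos : ∀ᶠ p : ℝ × (Matrix (Fin n) (Fin r) ℝ × Matrix (Fin m) (Fin r) ℝ) in l, 0 < p.1 :=
    Eventually.prod_inl (eventually_mem_nhdsWithin.mono fun t ht => ht) _
  -- strict differentiability of f
  have hfd_eq : fderiv ℝ f = fun Y => frobL (f' Y) := by
    funext Y; exact ContinuousLinearMap.ext fun Z => by rw [hgrad]; rfl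
  have hC1 : ContDiff ℝ 1 f := by
    refine contDiff_one_iff_fderiv.2 ⟨hdiff, ?_⟩
    erw [hfd_eq]
    exact (PsiLM.continuous_of_finiteDimensional).comp hcont
  have hstrict : HasStrictFDerivAt f (frobL (f' X)) X := by
    have h1 := (hC1.contDiffAt (x := X)).hasStrictFDerivAt one_ne_zero
    erw [hfd_eq] at h1
    exact h1
  -- the direction
  set M : Matrix (Fin n) (Fin m) ℝ := Ubar * Hᵀ + G * Vbarᵀ with hM
  set W : ℝ × (Matrix (Fin n) (Fin r) ℝ × Matrix (Fin m) (Fin r) ℝ) → Matrix (Fin n) (Fin m) ℝ :=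
    fun p => Ubar * p.2.2ᵀ + p.2.1 * Vbarᵀ + p.1 • (p.2.1 * p.2.2ᵀ) with hW
  have hWt : Tendsto W l (𝓝 M) := by
    have h1 : Tendsto (fun p : ℝ × (Matrix (Fin n) (Fin r) ℝ × Matrix (Fin m) (Fin r) ℝ) => Ubar * p.2.2ᵀ) l (𝓝 (Ubar * Hᵀ)) :=
      (((lmulT (b := m) Ubar).continuous_of_finiteDimensional).tendsto H).comp hH'
    have h2 : Tendsto (fun p : ℝ × (Matrix (Fin n) (Fin r) ℝ × Matrix (Fin m) (Fin r) ℝ) => p.2.1 * Vbarᵀ) l (𝓝 (G * Vbarᵀ)) :=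
      (((rmulT (a := n) Vbar).continuous_of_finiteDimensional).tendsto G).comp hG'
    have hmulc : Continuous fun q : Matrix (Fin n) (Fin r) ℝ × Matrix (Fin m) (Fin r) ℝ => q.1 * q.2ᵀ := isBBM_mulT.continuous
    have h3 : Tendsto (fun p : ℝ × (Matrix (Fin n) (Fin r) ℝ × Matrix (Fin m) (Fin r) ℝ) => p.1 • (p.2.1 * p.2.2ᵀ)) l
        (𝓝 ((0:ℝ) • (G * Hᵀ))) := by
      exact hfst0.smul ((hmulc.tendsto (G, H)).comp hsnd)
    have := (h1.add h2).add h3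
    rw [zero_smul, add_zero] at this
    exact this
  have hfpart : Tendsto (fun p : ℝ × (Matrix (Fin n) (Fin r) ℝ × Matrix (Fin m) (Fin r) ℝ) => (f (X + p.1 • W p) - f X) / p.1) l
      (𝓝 (frobL (f' X) M)) := tendsto_quot' hstrict hfst hWt
  have halg : ∀ p : ℝ × (Matrix (Fin n) (Fin r) ℝ × Matrix (Fin m) (Fin r) ℝ),
      (Ubar + p.1 • p.2.1) * (Vbar + p.1 • p.2.2)ᵀ = X + p.1 • W p := by
    intro p
    simp only [hW, hX, Matrix.transpose_add, Matrix.transpose_smul, Matrix.add_mul,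
      Matrix.mul_add, Matrix.smul_mul, Matrix.mul_smul, smul_add, smul_smul]
    module
  have hfpart' : Tendsto (fun p : ℝ × (Matrix (Fin n) (Fin r) ℝ × Matrix (Fin m) (Fin r) ℝ) =>
      (f ((Ubar + p.1 • p.2.1) * (Vbar + p.1 • p.2.2)ᵀ) - f X) / p.1) l
      (𝓝 (frobInner (f' X) M)) := by
    refine Tendsto.congr (fun p => by rw [halg p]) ?_
    exact hfpart
  -- quadratic parts
  have hq1 : Tendsto (fun p : ℝ × (Matrix (Fin n) (Fin r) ℝ × Matrix (Fin m) (Fin r) ℝ) =>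
      (frobInner (Ubar + p.1 • p.2.1) (Ubar + p.1 • p.2.1) - frobInner Ubar Ubar) / p.1) l
      (𝓝 (2 * frobInner Ubar G)) := by
    have key : Tendsto (fun p : ℝ × (Matrix (Fin n) (Fin r) ℝ × Matrix (Fin m) (Fin r) ℝ) =>
        2 * frobInner Ubar p.2.1 + p.1 * frobInner p.2.1 p.2.1) l
        (𝓝 (2 * frobInner Ubar G + 0 * frobInner G G)) := by
      refine Tendsto.add ?_ (hfst0.mul ((continuous_frobInner_self.tendsto G).comp hG'))
      exact tendsto_const_nhds.mul (((frobLM Ubar).continuous_of_finiteDimensional.tendsto G).comp hG')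
    rw [zero_mul, add_zero] at key
    refine Tendsto.congr' ?_ key
    filter_upwards [hpos] with p hp
    have ht : p.1 ≠ 0 := ne_of_gt hp
    rw [frobInner_add_left, frobInner_add_right, frobInner_add_right,
      frobInner_smul_left, frobInner_smul_right, frobInner_smul_left, frobInner_smul_right,
      frobInner_comm p.2.1 Ubar]
    field_simp
    ring
  have hq2 : Tendsto (fun p : ℝ × (Matrix (Fin n) (Fin r) ℝ × Matrix (Fin m) (Fin r) ℝ) =>
      (frobInner (Vbar + p.1 • p.2.2) (Vbar + p.1 • p.2.2) - frobInner Vbar Vbar) / p.1) l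
      (𝓝 (2 * frobInner Vbar H)) := by
    have key : Tendsto (fun p : ℝ × (Matrix (Fin n) (Fin r) ℝ × Matrix (Fin m) (Fin r) ℝ) =>
        2 * frobInner Vbar p.2.2 + p.1 * frobInner p.2.2 p.2.2) l
        (𝓝 (2 * frobInner Vbar H + 0 * frobInner H H)) := by
      refine Tendsto.add ?_ (hfst0.mul ((continuous_frobInner_self.tendsto H).comp hH'))
      exact tendsto_const_nhds.mul (((frobLM Vbar).continuous_of_finiteDimensional.tendsto H).comp hH')
    rw [zero_mul, add_zero] at key
    refine Tendsto.congr' ?_ key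
    filter_upwards [hpos] with p hp
    have ht : p.1 ≠ 0 := ne_of_gt hp
    rw [frobInner_add_left, frobInner_add_right, frobInner_add_right,
      frobInner_smul_left, frobInner_smul_right, frobInner_smul_left, frobInner_smul_right,
      frobInner_comm p.2.2 Vbar]
    field_simp
    ring
  have hsum := hfpart'.add ((hq1.add hq2).const_mul (mu / 2))
  have hval : frobInner (f' X) M + mu / 2 * (2 * frobInner Ubar G + 2 * frobInner Vbar H)
      = frobInner (f' X * Vbar + mu • Ubar) G + frobInner ((f' X)ᵀ * Ubar + mu • Vbar) H := by
    rw [hM, frobInner_add_right, frobInner_mulleft, frobInner_mulright,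
      frobInner_add_left, frobInner_add_left, frobInner_smul_left, frobInner_smul_left]
    ring
  rw [hval] at hsum
  refine Tendsto.congr (fun p => ?_) hsum
  rw [hX]
  ring
end Smooth


/-- number of new columns -/
noncomputable def colCnt {a b : ℕ} (U W : Matrix (Fin a) (Fin b) ℝ) : ℕ :=
  {j | (fun i => U i j) = 0 ∧ (fun i => W i j) ≠ 0}.ncard

lemma l20_add_smul {a b : ℕ} (U W : Matrix (Fin a) (Fin b) ℝ) (t : ℝ) (ht : t ≠ 0)
    (h : ∀ j, (fun i => U i j) ≠ 0 → (fun i => (U + t • W) i j) ≠ 0) :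
    l20 (U + t • W) = l20 U + colCnt U W := by
  have hset : {j : Fin b | (fun i => (U + t • W) i j) ≠ 0}
      = {j | (fun i => U i j) ≠ 0} ∪ {j | (fun i => U i j) = 0 ∧ (fun i => W i j) ≠ 0} := by
    ext j
    simp only [Set.mem_setOf_eq, Set.mem_union]
    constructor
    · intro hj
      by_cases h0 : (fun i => U i j) = 0
      · refine Or.inr ⟨h0, fun hWc => hj ?_⟩
        funext i
        have hU0 : U i j = 0 := congrFun h0 i
        have hW0 : W i j = 0 := congrFun hWc i
        simp [Matrix.add_apply, Matrix.smul_apply, hU0, hW0]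
      · exact Or.inl h0
    · rintro (hj | ⟨h0, hWc⟩)
      · exact h j hj
      · intro hc
        apply hWc
        funext i
        have hcc : (U + t • W) i j = 0 := congrFun hc i
        have hU0 : U i j = 0 := congrFun h0 i
        have hmul : t * W i j = 0 := by
          simpa [Matrix.add_apply, Matrix.smul_apply, hU0] using hcc
        exact (mul_eq_zero.1 hmul).resolve_left ht
  unfold l20 colCnt
  rw [hset, Set.ncard_union_eq ?_]
  exact Set.disjoint_left.2 fun {j} hj hj2 => by
    simp only [Set.mem_setOf_eq] at hj hj2
    exact hj hj2.1


/-- the subderivative of `Φ_{λ,μ}` at `(Ū,V̄)` in a direction `(G,H)`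
equals `⟨∇f(ŪV̄ᵀ)V̄ + μŪ, G⟩ + ⟨(∇f(ŪV̄ᵀ))ᵀŪ + μV̄, H⟩` when `J_G ⊆ J_Ū` and `J_H ⊆ J_V̄`,
and `+∞` otherwise; consequently a direction of negative subderivative is a descent
direction of `F_μ` at `(Ū,V̄)`. -/
theorem subderiv_Phi {n m r : ℕ}
    (f : Matrix (Fin n) (Fin m) ℝ → ℝ) (f' : Matrix (Fin n) (Fin m) ℝ → Matrix (Fin n) (Fin m) ℝ)
    (hdiff : Differentiable ℝ f)
    (hgrad : ∀ X H, fderiv ℝ f X H = frobInner (f' X) H)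
    (hcont : Continuous f')
    (lam mu : ℝ) (hlam : 0 < lam) (hmu : 0 < mu)
    (Ubar : Matrix (Fin n) (Fin r) ℝ) (Vbar : Matrix (Fin m) (Fin r) ℝ)
    (G : Matrix (Fin n) (Fin r) ℝ) (H : Matrix (Fin m) (Fin r) ℝ) :
    (((∀ j : Fin r, (fun i => G i j) ≠ 0 → (fun i => Ubar i j) ≠ 0) ∧
        (∀ j : Fin r, (fun i => H i j) ≠ 0 → (fun i => Vbar i j) ≠ 0)) →
      subderiv (fun p : Matrix (Fin n) (Fin r) ℝ × Matrix (Fin m) (Fin r) ℝ =>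
          Phi f lam mu p.1 p.2) (Ubar, Vbar) (G, H) =
        ((frobInner (f' (Ubar * Vbarᵀ) * Vbar + mu • Ubar) G +
            frobInner ((f' (Ubar * Vbarᵀ))ᵀ * Ubar + mu • Vbar) H : ℝ) : EReal)) ∧
    (¬ ((∀ j : Fin r, (fun i => G i j) ≠ 0 → (fun i => Ubar i j) ≠ 0) ∧
        (∀ j : Fin r, (fun i => H i j) ≠ 0 → (fun i => Vbar i j) ≠ 0)) →
      subderiv (fun p : Matrix (Fin n) (Fin r) ℝ × Matrix (Fin m) (Fin r) ℝ =>
          Phi f lam mu p.1 p.2) (Ubar, Vbar) (G, H) = ⊤) ∧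
    (subderiv (fun p : Matrix (Fin n) (Fin r) ℝ × Matrix (Fin m) (Fin r) ℝ =>
          Phi f lam mu p.1 p.2) (Ubar, Vbar) (G, H) < 0 →
      frobInner (f' (Ubar * Vbarᵀ) * Vbar + mu • Ubar) G +
          frobInner ((f' (Ubar * Vbarᵀ))ᵀ * Ubar + mu • Vbar) H < 0) := by

  classical
  set Lval : ℝ := frobInner (f' (Ubar * Vbarᵀ) * Vbar + mu • Ubar) G +
      frobInner ((f' (Ubar * Vbarᵀ))ᵀ * Ubar + mu • Vbar) H with hLval
  set l := (𝓝[>] (0:ℝ)) ×ˢ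
      𝓝 ((G, H) : Matrix (Fin n) (Fin r) ℝ × Matrix (Fin m) (Fin r) ℝ) with hldef
  haveI hnb : l.NeBot := by rw [hldef]; exact Filter.prod_neBot.2 ⟨by infer_instance, by infer_instance⟩
  set q : ℝ × (Matrix (Fin n) (Fin r) ℝ × Matrix (Fin m) (Fin r) ℝ) → ℝ :=
    fun p => (Phi f lam mu (Ubar + p.1 • p.2.1) (Vbar + p.1 • p.2.2)
      - Phi f lam mu Ubar Vbar) / p.1 with hqdef
  have hqeq : subderiv (fun p : Matrix (Fin n) (Fin r) ℝ × Matrix (Fin m) (Fin r) ℝ =>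
      Phi f lam mu p.1 p.2) (Ubar, Vbar) (G, H)
      = Filter.liminf (fun p => ((q p : ℝ) : EReal)) l := rfl
  set Qs : ℝ × (Matrix (Fin n) (Fin r) ℝ × Matrix (Fin m) (Fin r) ℝ) → ℝ :=
    fun p => ((f ((Ubar + p.1 • p.2.1) * (Vbar + p.1 • p.2.2)ᵀ)
        + mu / 2 * (frobInner (Ubar + p.1 • p.2.1) (Ubar + p.1 • p.2.1)
                    + frobInner (Vbar + p.1 • p.2.2) (Vbar + p.1 • p.2.2)))
       - (f (Ubar * Vbarᵀ) + mu / 2 * (frobInner Ubar Ubar + frobInner Vbar Vbar))) / p.1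
    with hQsdef
  have hQs : Tendsto Qs l (𝓝 Lval) := tendsto_smooth f f' hdiff hgrad hcont mu Ubar Vbar G H
  have hfst : Tendsto (fun p : ℝ × (Matrix (Fin n) (Fin r) ℝ × Matrix (Fin m) (Fin r) ℝ) => p.1)
      l (𝓝[>] (0:ℝ)) := tendsto_fst
  have hfst0 : Tendsto (fun p : ℝ × (Matrix (Fin n) (Fin r) ℝ × Matrix (Fin m) (Fin r) ℝ) => p.1)
      l (𝓝 (0:ℝ)) := hfst.mono_right nhdsWithin_le_nhds
  have hsnd : Tendsto (fun p : ℝ × (Matrix (Fin n) (Fin r) ℝ × Matrix (Fin m) (Fin r) ℝ) => p.2)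
      l (𝓝 (G, H)) := tendsto_snd
  have hG' : Tendsto (fun p : ℝ × (Matrix (Fin n) (Fin r) ℝ × Matrix (Fin m) (Fin r) ℝ) => p.2.1)
      l (𝓝 G) := (continuous_fst.tendsto (G, H)).comp hsnd
  have hH' : Tendsto (fun p : ℝ × (Matrix (Fin n) (Fin r) ℝ × Matrix (Fin m) (Fin r) ℝ) => p.2.2)
      l (𝓝 H) := (continuous_snd.tendsto (G, H)).comp hsnd
  have hpos : ∀ᶠ p : ℝ × (Matrix (Fin n) (Fin r) ℝ × Matrix (Fin m) (Fin r) ℝ) in l, 0 < p.1 :=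
    Eventually.prod_inl (eventually_mem_nhdsWithin.mono fun t ht => ht) _
  -- eventual column facts
  have hcolU : ∀ᶠ p : ℝ × (Matrix (Fin n) (Fin r) ℝ × Matrix (Fin m) (Fin r) ℝ) in l,
      ∀ j : Fin r, (fun i => Ubar i j) ≠ 0 →
        (fun i => (Ubar + p.1 • p.2.1) i j) ≠ 0 := by
    rw [eventually_all]
    intro j
    by_cases h0 : (fun i => Ubar i j) = 0
    · filter_upwards with p hcontra
      exact absurd h0 hcontra
    · obtain ⟨i0, hi0⟩ : ∃ i, Ubar i j ≠ 0 := by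
        by_contra hall; push_neg at hall; exact h0 (funext hall)
      have hent : Tendsto (fun p : ℝ × (Matrix (Fin n) (Fin r) ℝ × Matrix (Fin m) (Fin r) ℝ) =>
          p.1 * p.2.1 i0 j) l (𝓝 (0 * G i0 j)) :=
        hfst0.mul (((continuous_entry i0 j).tendsto G).comp hG')
      rw [zero_mul] at hent
      have hev : ∀ᶠ p : ℝ × (Matrix (Fin n) (Fin r) ℝ × Matrix (Fin m) (Fin r) ℝ) in l,
          |p.1 * p.2.1 i0 j| < |Ubar i0 j| :=
        Tendsto.eventually_lt_const (abs_pos.2 hi0) (by simpa using hent.abs)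
      filter_upwards [hev] with p hp
      intro _ hc
      have hcc : Ubar i0 j + p.1 * p.2.1 i0 j = 0 := by
        have := congrFun hc i0
        simpa [Matrix.add_apply, Matrix.smul_apply] using this
      have : p.1 * p.2.1 i0 j = - Ubar i0 j := by linarith
      rw [this, abs_neg] at hp
      exact lt_irrefl _ hp
  have hcolV : ∀ᶠ p : ℝ × (Matrix (Fin n) (Fin r) ℝ × Matrix (Fin m) (Fin r) ℝ) in l,
      ∀ j : Fin r, (fun i => Vbar i j) ≠ 0 →
        (fun i => (Vbar + p.1 • p.2.2) i j) ≠ 0 := by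
    rw [eventually_all]
    intro j
    by_cases h0 : (fun i => Vbar i j) = 0
    · filter_upwards with p hcontra
      exact absurd h0 hcontra
    · obtain ⟨i0, hi0⟩ : ∃ i, Vbar i j ≠ 0 := by
        by_contra hall; push_neg at hall; exact h0 (funext hall)
      have hent : Tendsto (fun p : ℝ × (Matrix (Fin n) (Fin r) ℝ × Matrix (Fin m) (Fin r) ℝ) =>
          p.1 * p.2.2 i0 j) l (𝓝 (0 * H i0 j)) :=
        hfst0.mul (((continuous_entry i0 j).tendsto H).comp hH')
      rw [zero_mul] at hent
      have hev : ∀ᶠ p : ℝ × (Matrix (Fin n) (Fin r) ℝ × Matrix (Fin m) (Fin r) ℝ) in l,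
          |p.1 * p.2.2 i0 j| < |Vbar i0 j| :=
        Tendsto.eventually_lt_const (abs_pos.2 hi0) (by simpa using hent.abs)
      filter_upwards [hev] with p hp
      intro _ hc
      have hcc : Vbar i0 j + p.1 * p.2.2 i0 j = 0 := by
        have := congrFun hc i0
        simpa [Matrix.add_apply, Matrix.smul_apply] using this
      have : p.1 * p.2.2 i0 j = - Vbar i0 j := by linarith
      rw [this, abs_neg] at hp
      exact lt_irrefl _ hp
  have hevsplit : ∀ᶠ p : ℝ × (Matrix (Fin n) (Fin r) ℝ × Matrix (Fin m) (Fin r) ℝ) in l,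
      q p = Qs p + lam * ((colCnt Ubar p.2.1 : ℝ) + (colCnt Vbar p.2.2 : ℝ)) / p.1 := by
    filter_upwards [hpos, hcolU, hcolV] with p hp hU hV
    have hneU := l20_add_smul Ubar p.2.1 p.1 (ne_of_gt hp) hU
    have hneV := l20_add_smul Vbar p.2.2 p.1 (ne_of_gt hp) hV
    rw [hqdef, hQsdef]
    simp only [Phi, hneU, hneV]
    push_cast
    ring
  -- key 1
  have key1 : ((∀ j : Fin r, (fun i => G i j) ≠ 0 → (fun i => Ubar i j) ≠ 0) ∧
        (∀ j : Fin r, (fun i => H i j) ≠ 0 → (fun i => Vbar i j) ≠ 0)) →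
      subderiv (fun p : Matrix (Fin n) (Fin r) ℝ × Matrix (Fin m) (Fin r) ℝ =>
          Phi f lam mu p.1 p.2) (Ubar, Vbar) (G, H) = ((Lval : ℝ) : EReal) := by
    rintro ⟨hJU, hJV⟩
    have hcU0 : colCnt Ubar G = 0 := by
      unfold colCnt
      rw [Set.ncard_eq_zero]
      exact Set.eq_empty_iff_forall_notMem.2 fun j hj => (hJU j hj.2) hj.1
    have hcV0 : colCnt Vbar H = 0 := by
      unfold colCnt
      rw [Set.ncard_eq_zero]
      exact Set.eq_empty_iff_forall_notMem.2 fun j hj => (hJV j hj.2) hj.1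
    rw [hqeq]
    refine le_antisymm ?_ ?_
    · set l2 := (𝓝[>] (0:ℝ)) ×ˢ
        (pure ((G, H) : Matrix (Fin n) (Fin r) ℝ × Matrix (Fin m) (Fin r) ℝ) : Filter _) with hl2def
      have hl2 : l2 ≤ l := by
        rw [hl2def, hldef]
        exact Filter.prod_mono le_rfl (pure_le_nhds _)
      haveI : l2.NeBot := by
        rw [hl2def]
        exact Filter.prod_neBot.2 ⟨by infer_instance, by infer_instance⟩
      have hsnd2 : ∀ᶠ p : ℝ × (Matrix (Fin n) (Fin r) ℝ × Matrix (Fin m) (Fin r) ℝ) in l2,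
          p.2 = (G, H) := by
        rw [hl2def]
        exact Eventually.prod_inr
          (show ∀ᶠ x in (pure ((G, H) : Matrix (Fin n) (Fin r) ℝ × Matrix (Fin m) (Fin r) ℝ) :
              Filter _), x = (G, H) from eventually_pure.2 rfl) _
      have hqg : Tendsto (fun p => ((q p : ℝ) : EReal)) l2 (𝓝 ((Lval : ℝ) : EReal)) := by
        rw [EReal.tendsto_coe]
        refine (hQs.mono_left hl2).congr' ?_
        filter_upwards [hevsplit.filter_mono hl2, hsnd2] with p h1 h2
        rw [h1, h2]
        norm_num [hcU0, hcV0]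
      exact le_trans (liminf_le_liminf_of_le hl2) (le_of_eq hqg.liminf_eq)
    · have hlow : ∀ᶠ p : ℝ × (Matrix (Fin n) (Fin r) ℝ × Matrix (Fin m) (Fin r) ℝ) in l,
          ((Qs p : ℝ) : EReal) ≤ ((q p : ℝ) : EReal) := by
        filter_upwards [hevsplit, hpos] with p h1 h2
        rw [h1]
        refine EReal.coe_le_coe_iff.2 (le_add_of_nonneg_right ?_)
        have hnn : (0:ℝ) ≤ (colCnt Ubar p.2.1 : ℝ) + (colCnt Vbar p.2.2 : ℝ) := by positivity
        exact div_nonneg (mul_nonneg hlam.le hnn) h2.le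
      calc ((Lval : ℝ) : EReal)
          = Filter.liminf (fun p => ((Qs p : ℝ) : EReal)) l :=
            (Filter.Tendsto.liminf_eq (EReal.tendsto_coe.2 hQs)).symm
        _ ≤ Filter.liminf (fun p => ((q p : ℝ) : EReal)) l := Filter.liminf_le_liminf hlow
  -- key 2
  have key2 : ¬ ((∀ j : Fin r, (fun i => G i j) ≠ 0 → (fun i => Ubar i j) ≠ 0) ∧
        (∀ j : Fin r, (fun i => H i j) ≠ 0 → (fun i => Vbar i j) ≠ 0)) →
      subderiv (fun p : Matrix (Fin n) (Fin r) ℝ × Matrix (Fin m) (Fin r) ℝ =>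
          Phi f lam mu p.1 p.2) (Ubar, Vbar) (G, H) = ⊤ := by
    intro hJ
    have hone : ∀ᶠ p : ℝ × (Matrix (Fin n) (Fin r) ℝ × Matrix (Fin m) (Fin r) ℝ) in l,
        1 ≤ (colCnt Ubar p.2.1 : ℝ) + (colCnt Vbar p.2.2 : ℝ) := by
      rw [not_and_or] at hJ
      rcases hJ with hA | hB
      · push_neg at hA
        obtain ⟨j, hGj, hUj⟩ := hA
        obtain ⟨i0, hi0⟩ : ∃ i, G i j ≠ 0 := by
          by_contra hall; push_neg at hall; exact hGj (funext hall)
        have hent : ∀ᶠ p : ℝ × (Matrix (Fin n) (Fin r) ℝ × Matrix (Fin m) (Fin r) ℝ) in l,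
            p.2.1 i0 j ≠ 0 :=
          (((continuous_entry i0 j).tendsto G).comp hG').eventually_ne hi0
        filter_upwards [hent] with p hp
        have hj : j ∈ {j' | (fun i => Ubar i j') = 0 ∧ (fun i => p.2.1 i j') ≠ 0} :=
          ⟨hUj, fun hc => hp (congrFun hc i0)⟩
        have h1 : 0 < colCnt Ubar p.2.1 := by
          unfold colCnt; exact (Set.ncard_pos (Set.toFinite _)).2 ⟨j, hj⟩
        have h2 : (1:ℝ) ≤ (colCnt Ubar p.2.1 : ℝ) := by exact_mod_cast h1
        have h3 : (0:ℝ) ≤ (colCnt Vbar p.2.2 : ℝ) := Nat.cast_nonneg _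
        linarith
      · push_neg at hB
        obtain ⟨j, hHj, hVj⟩ := hB
        obtain ⟨i0, hi0⟩ : ∃ i, H i j ≠ 0 := by
          by_contra hall; push_neg at hall; exact hHj (funext hall)
        have hent : ∀ᶠ p : ℝ × (Matrix (Fin n) (Fin r) ℝ × Matrix (Fin m) (Fin r) ℝ) in l,
            p.2.2 i0 j ≠ 0 :=
          (((continuous_entry i0 j).tendsto H).comp hH').eventually_ne hi0
        filter_upwards [hent] with p hp
        have hj : j ∈ {j' | (fun i => Vbar i j') = 0 ∧ (fun i => p.2.2 i j') ≠ 0} :=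
          ⟨hVj, fun hc => hp (congrFun hc i0)⟩
        have h1 : 0 < colCnt Vbar p.2.2 := by
          unfold colCnt; exact (Set.ncard_pos (Set.toFinite _)).2 ⟨j, hj⟩
        have h2 : (1:ℝ) ≤ (colCnt Vbar p.2.2 : ℝ) := by exact_mod_cast h1
        have h3 : (0:ℝ) ≤ (colCnt Ubar p.2.1 : ℝ) := Nat.cast_nonneg _
        linarith
    have hge : ∀ᶠ p : ℝ × (Matrix (Fin n) (Fin r) ℝ × Matrix (Fin m) (Fin r) ℝ) in l,
        Qs p + lam * p.1⁻¹ ≤ q p := by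
      filter_upwards [hevsplit, hpos, hone] with p h1 h2 h3
      rw [h1]
      have hkey : lam * p.1⁻¹ ≤ lam * ((colCnt Ubar p.2.1 : ℝ) + (colCnt Vbar p.2.2 : ℝ)) / p.1 := by
        rw [mul_div_assoc, div_eq_mul_inv]
        have := mul_le_mul_of_nonneg_left h3 hlam.le
        have hinv : (0:ℝ) ≤ p.1⁻¹ := (inv_pos.2 h2).le
        nlinarith
      linarith
    have hatTop : Tendsto q l atTop := by
      refine tendsto_atTop_mono' l hge ?_
      exact hQs.add_atTop ((tendsto_inv_nhdsGT_zero.comp hfst).const_mul_atTop hlam)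
    rw [hqeq]
    refine Filter.Tendsto.liminf_eq ?_
    rw [EReal.tendsto_nhds_top_iff_real]
    intro x
    filter_upwards [hatTop.eventually_gt_atTop x] with p hp
    exact_mod_cast EReal.coe_lt_coe_iff.2 hp
  refine ⟨key1, key2, ?_⟩
  intro hlt
  by_cases hJ : ((∀ j : Fin r, (fun i => G i j) ≠ 0 → (fun i => Ubar i j) ≠ 0) ∧
      (∀ j : Fin r, (fun i => H i j) ≠ 0 → (fun i => Vbar i j) ≠ 0))
  · rw [key1 hJ] at hlt
    rw [show ((0:EReal)) = (((0:ℝ)) : EReal) from rfl] at hlt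
    exact EReal.coe_lt_coe_iff.1 hlt
  · rw [key2 hJ] at hlt
    exact absurd hlt (not_top_lt)
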